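/- Let ℓ₂³ be the 3-dimensional complex Hilbert space, p > 2, and define T₁(x,y,z) = (z/2^{1/p}, 0, 0), T₂(x,y,z) = (0, z/2^{1/p}, 0). Then for 𝒯 = (T₁,T₂): ‖𝒯‖_p = 1 and w_p(𝒯) = 1/2^{1+1/p}. Consequently n_{(p,2)}(ℓ₂^m) = 1/2^{1+1/p} for all m ≥ 3, and n_{(p,2)}(ℓ₂) = 1/2^{1+1/p}. -/

import Mathlib

open scoped ENNReal

noncomputable section

/-- The set Π_X of pairs (x, x*) with ‖x‖ = 1, ‖x*‖ = 1 and x*(x) = 1. -/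
def dualPairs (𝕜 X : Type*) [RCLike 𝕜] [NormedAddCommGroup X] [NormedSpace 𝕜 X] :
    Set (X × (X →L[𝕜] 𝕜)) :=
  {q | ‖q.1‖ = 1 ∧ ‖q.2‖ = 1 ∧ q.2 q.1 = 1}

/-- Numerical range of an operator. -/
def numRange {𝕜 X : Type*} [RCLike 𝕜] [NormedAddCommGroup X] [NormedSpace 𝕜 X]
    (T : X →L[𝕜] X) : Set 𝕜 :=
  {c | ∃ q ∈ dualPairs 𝕜 X, c = q.2 (T q.1)}

/-- Numerical radius of an operator. -/
def numRadius {𝕜 X : Type*} [RCLike 𝕜] [NormedAddCommGroup X] [NormedSpace 𝕜 X]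
    (T : X →L[𝕜] X) : ℝ :=
  sSup {r | ∃ q ∈ dualPairs 𝕜 X, r = ‖q.2 (T q.1)‖}

/-- Joint numerical range of a k-tuple of operators. -/
def jointNumRange {𝕜 X : Type*} [RCLike 𝕜] [NormedAddCommGroup X] [NormedSpace 𝕜 X]
    {k : ℕ} (T : Fin k → X →L[𝕜] X) : Set (Fin k → 𝕜) :=
  {v | ∃ q ∈ dualPairs 𝕜 X, v = fun i => q.2 (T i q.1)}

/-- The p-th joint numerical radius of a k-tuple of operators. -/
def jointNumRadius {𝕜 X : Type*} [RCLike 𝕜] [NormedAddCommGroup X] [NormedSpace 𝕜 X]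
    (p : ℝ) {k : ℕ} (T : Fin k → X →L[𝕜] X) : ℝ :=
  sSup {r | ∃ q ∈ dualPairs 𝕜 X, r = (∑ i, ‖q.2 (T i q.1)‖ ^ p) ^ (1 / p)}

/-- The p-th joint operator norm of a k-tuple of operators. -/
def jointOpNorm {𝕜 X Y : Type*} [RCLike 𝕜] [NormedAddCommGroup X] [NormedSpace 𝕜 X]
    [NormedAddCommGroup Y] [NormedSpace 𝕜 Y]
    (p : ℝ) {k : ℕ} (T : Fin k → X →L[𝕜] Y) : ℝ :=
  sSup {r | ∃ x : X, ‖x‖ = 1 ∧ r = (∑ i, ‖T i x‖ ^ p) ^ (1 / p)}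

/-- The numerical index of a space. -/
def numIndex (𝕜 X : Type*) [RCLike 𝕜] [NormedAddCommGroup X] [NormedSpace 𝕜 X] : ℝ :=
  sInf {r | ∃ T : X →L[𝕜] X, ‖T‖ = 1 ∧ r = numRadius T}

/-- The (p,k)-th joint numerical index of a space. -/
def jointNumIndex (p : ℝ) (k : ℕ) (𝕜 X : Type*) [RCLike 𝕜] [NormedAddCommGroup X]
    [NormedSpace 𝕜 X] : ℝ :=
  sInf {r | ∃ T : Fin k → X →L[𝕜] X, jointOpNorm p T = 1 ∧ r = jointNumRadius p T}

open scoped ComplexInnerProductSpace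

section AuxStmt19

variable {H : Type*} [NormedAddCommGroup H] [InnerProductSpace ℂ H]

lemma rpow_self_inv {p a : ℝ} (hp : 0 < p) (ha : 0 ≤ a) : (a ^ p) ^ (1 / p) = a := by
  rw [one_div]; exact Real.rpow_rpow_inv ha hp.ne'

lemma two_rpow_inv_rpow {p : ℝ} (hp : 0 < p) : (((2:ℝ) ^ (1 / p)) ^ p) = 2 := by
  rw [one_div]; exact Real.rpow_inv_rpow (by norm_num) hp.ne'

lemma pnorm_le_sqrt {p a b : ℝ} (hp : 2 < p) (ha : 0 ≤ a) (hb : 0 ≤ b) :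
    (a ^ p + b ^ p) ^ (1 / p) ≤ Real.sqrt (a ^ 2 + b ^ 2) := by
  have hp0 : (0:ℝ) < p := by linarith
  set s := Real.sqrt (a ^ 2 + b ^ 2) with hs
  have hs0 : 0 ≤ s := Real.sqrt_nonneg _
  have hs2 : s ^ 2 = a ^ 2 + b ^ 2 := Real.sq_sqrt (by positivity)
  have ha' : a ≤ s := by nlinarith
  have hb' : b ≤ s := by nlinarith
  rcases eq_or_lt_of_le hs0 with h0 | hspos
  · have ha0 : a = 0 := le_antisymm (by rw [← h0] at ha'; exact ha') ha
    have hb0 : b = 0 := le_antisymm (by rw [← h0] at hb'; exact hb') hb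
    rw [ha0, hb0, Real.zero_rpow hp0.ne', add_zero, Real.zero_rpow (by positivity)]
    exact hs0
  · have key : a ^ p + b ^ p ≤ s ^ p := by
      have h2 : ∀ t : ℝ, 0 ≤ t → t ≤ s → t ^ p ≤ t ^ 2 * s ^ (p - 2) := by
        intro t ht hts
        rcases eq_or_lt_of_le ht with h | htpos
        · rw [← h, Real.zero_rpow hp0.ne']
          positivity
        · have : t ^ p = t ^ (2:ℝ) * t ^ (p - 2) := by
            rw [← Real.rpow_add htpos]; norm_num
          rw [this, Real.rpow_two]
          have : t ^ (p - 2) ≤ s ^ (p - 2) :=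
            Real.rpow_le_rpow ht hts (by linarith)
          exact mul_le_mul_of_nonneg_left this (by positivity)
      have hsp : s ^ 2 * s ^ (p - 2) = s ^ p := by
        rw [← Real.rpow_two, ← Real.rpow_add hspos]; norm_num
      have := h2 a ha ha'
      have := h2 b hb hb'
      nlinarith [Real.rpow_nonneg hs0 (p - 2)]
    calc (a ^ p + b ^ p) ^ (1 / p) ≤ (s ^ p) ^ (1 / p) :=
          Real.rpow_le_rpow (by positivity) key (by positivity)
    _ = s := rpow_self_inv hp0 hs0

lemma mem_dualPairs_iff [CompleteSpace H] (q : H × (H →L[ℂ] ℂ)) :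
    q ∈ dualPairs ℂ H ↔ ‖q.1‖ = 1 ∧ q.2 = innerSL ℂ q.1 := by
  constructor
  · rintro ⟨h1, h2, h3⟩
    refine ⟨h1, ?_⟩
    set u := (InnerProductSpace.toDual ℂ H).symm q.2 with hu
    have hq2 : ∀ y, q.2 y = ⟪u, y⟫ := fun y => by
      rw [← InnerProductSpace.toDual_apply_apply]; simp [hu]
    have hnu : ‖u‖ = 1 := by
      rw [hu, LinearIsometryEquiv.norm_map]; exact h2
    have h4 : ⟪u, q.1⟫ = 1 := by rw [← hq2]; exact h3
    have h5 : u = q.1 := (inner_eq_one_iff_of_norm_eq_one hnu h1).mp h4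
    ext y
    rw [hq2, innerSL_apply_apply, h5]
  · rintro ⟨h1, h2⟩
    refine ⟨h1, ?_, ?_⟩
    · rw [h2, innerSL_apply_norm, h1]
    · rw [h2, innerSL_apply_apply, inner_self_eq_norm_sq_to_K, h1]; norm_num

lemma opNorm_le_two_mul_of_inner (S : H →L[ℂ] H) {w : ℝ} (hw0 : 0 ≤ w)
    (hw : ∀ x : H, ‖x‖ = 1 → ‖(⟪x, S x⟫ : ℂ)‖ ≤ w) : ‖S‖ ≤ 2 * w := by
  have hq : ∀ x : H, ‖(⟪x, S x⟫ : ℂ)‖ ≤ w * ‖x‖ ^ 2 := by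
    intro x
    rcases eq_or_ne x 0 with rfl | hx
    · simp
    · have hnx : (‖x‖ : ℝ) ≠ 0 := norm_ne_zero_iff.mpr hx
      have h1 : ‖((‖x‖⁻¹ : ℝ) : ℂ) • x‖ = 1 := by
        rw [norm_smul]
        simp [abs_of_nonneg (inv_nonneg.mpr (norm_nonneg x)), inv_mul_cancel₀ hnx]
      have h2 := hw _ h1
      rw [map_smul, inner_smul_left, inner_smul_right] at h2
      rw [Complex.conj_ofReal] at h2
      simp only [norm_mul, Complex.norm_real, Real.norm_eq_abs,
        abs_of_nonneg (inv_nonneg.mpr (norm_nonneg x))] at h2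
      calc ‖(⟪x, S x⟫ : ℂ)‖ = ‖x‖ ^ 2 * (‖x‖⁻¹ * (‖x‖⁻¹ * ‖(⟪x, S x⟫ : ℂ)‖)) := by
            field_simp
      _ ≤ ‖x‖ ^ 2 * w := mul_le_mul_of_nonneg_left h2 (sq_nonneg _)
      _ = w * ‖x‖ ^ 2 := mul_comm _ _
  have pol : ∀ x y : H, ‖(⟪x, S y⟫ : ℂ) + ⟪y, S x⟫‖ ≤ w * (‖x‖ ^ 2 + ‖y‖ ^ 2) := by
    intro x y
    have key : (⟪x + y, S (x + y)⟫ : ℂ) - ⟪x - y, S (x - y)⟫ = 2 * (⟪x, S y⟫ + ⟪y, S x⟫) := by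
      simp only [map_add, map_sub, inner_add_left, inner_add_right, inner_sub_left,
        inner_sub_right]
      ring
    have h2 : (2:ℝ) * ‖(⟪x, S y⟫ : ℂ) + ⟪y, S x⟫‖
        = ‖(⟪x + y, S (x + y)⟫ : ℂ) - ⟪x - y, S (x - y)⟫‖ := by
      rw [key, norm_mul]
      norm_num
    have h3 := norm_sub_le (⟪x + y, S (x + y)⟫ : ℂ) (⟪x - y, S (x - y)⟫ : ℂ)
    have h4 := hq (x + y)
    have h5 := hq (x - y)
    have h6 : ‖x + y‖ ^ 2 + ‖x - y‖ ^ 2 = 2 * (‖x‖ ^ 2 + ‖y‖ ^ 2) := by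
      have := parallelogram_law_with_norm ℂ x y
      linarith
    nlinarith
  have key3 : ∀ x y : H, ‖x‖ = 1 → ‖y‖ = 1 → ‖(⟪y, S x⟫ : ℂ)‖ ≤ 2 * w := by
    intro x y hx hy
    have h1 : ‖(⟪x, S y⟫ : ℂ) + ⟪y, S x⟫‖ ≤ 2 * w := by
      have := pol x y; rw [hx, hy] at this; linarith
    have h2 : ‖(⟪x, S y⟫ : ℂ) - ⟪y, S x⟫‖ ≤ 2 * w := by
      have h := pol (Complex.I • x) y
      rw [map_smul, inner_smul_left, inner_smul_right, norm_smul] at h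
      simp only [Complex.norm_I, one_mul, hx, hy] at h
      have heq : (starRingEnd ℂ) Complex.I * ⟪x, S y⟫ + Complex.I * ⟪y, S x⟫
          = (-Complex.I) * ((⟪x, S y⟫ : ℂ) - ⟪y, S x⟫) := by
        rw [Complex.conj_I]; ring
      rw [heq, norm_mul] at h
      simp only [norm_neg, Complex.norm_I, one_mul] at h
      linarith
    have h3 : (2:ℝ) * ‖(⟪y, S x⟫ : ℂ)‖ ≤ ‖(⟪x, S y⟫ : ℂ) + ⟪y, S x⟫‖
        + ‖(⟪x, S y⟫ : ℂ) - ⟪y, S x⟫‖ := by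
      have := norm_sub_le ((⟪x, S y⟫ : ℂ) + ⟪y, S x⟫) ((⟪x, S y⟫ : ℂ) - ⟪y, S x⟫)
      have heq : ((⟪x, S y⟫ : ℂ) + ⟪y, S x⟫) - ((⟪x, S y⟫ : ℂ) - ⟪y, S x⟫)
          = 2 * ⟪y, S x⟫ := by ring
      rw [heq, norm_mul, Complex.norm_ofNat] at this
      linarith
    linarith
  have key4 : ∀ x : H, ‖x‖ = 1 → ‖S x‖ ≤ 2 * w := by
    intro x hx
    rcases eq_or_ne (S x) 0 with h0 | h0
    · rw [h0, norm_zero]; positivity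
    · have hn : (‖S x‖ : ℝ) ≠ 0 := norm_ne_zero_iff.mpr h0
      have hy : ‖((‖S x‖⁻¹ : ℝ) : ℂ) • S x‖ = 1 := by
        rw [norm_smul]
        simp [abs_of_nonneg (inv_nonneg.mpr (norm_nonneg (S x))), inv_mul_cancel₀ hn]
      have h1 := key3 x _ hx hy
      rw [inner_smul_left, Complex.conj_ofReal, inner_self_eq_norm_sq_to_K] at h1
      simp only [norm_mul, norm_pow, Complex.norm_real, RCLike.norm_ofReal, Real.norm_eq_abs,
        abs_of_nonneg (inv_nonneg.mpr (norm_nonneg (S x))),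
        abs_of_nonneg (norm_nonneg (S x))] at h1
      have hxpos : (0:ℝ) < ‖S x‖ := lt_of_le_of_ne (norm_nonneg _) (Ne.symm hn)
      calc ‖S x‖ = ‖S x‖⁻¹ * ‖S x‖ ^ 2 := by field_simp [sq]
      _ ≤ 2 * w := h1
  refine S.opNorm_le_bound (by positivity) ?_
  intro x
  rcases eq_or_ne x 0 with rfl | hx
  · simp
  · have hnx : (‖x‖ : ℝ) ≠ 0 := norm_ne_zero_iff.mpr hx
    have hu : ‖((‖x‖⁻¹ : ℝ) : ℂ) • x‖ = 1 := by
      rw [norm_smul]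
      simp [abs_of_nonneg (inv_nonneg.mpr (norm_nonneg x)), inv_mul_cancel₀ hnx]
    have h1 := key4 _ hu
    rw [map_smul, norm_smul] at h1
    simp only [Complex.norm_real, Real.norm_eq_abs,
      abs_of_nonneg (inv_nonneg.mpr (norm_nonneg x))] at h1
    have hxpos : (0:ℝ) < ‖x‖ := lt_of_le_of_ne (norm_nonneg x) (Ne.symm hnx)
    calc ‖S x‖ = ‖x‖ * (‖x‖⁻¹ * ‖S x‖) := by field_simp
    _ ≤ ‖x‖ * (2 * w) := by
        apply mul_le_mul_of_nonneg_left h1 (norm_nonneg x)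
    _ = 2 * w * ‖x‖ := by ring

lemma key_lemma {p : ℝ} (hp : 2 < p) [CompleteSpace H] (e : Fin 3 → H)
    (he : Orthonormal ℂ e) (S : Fin 2 → H →L[ℂ] H)
    (hS0 : ∀ x : H, S 0 x = ((⟪e 2, x⟫ : ℂ) / ((2:ℝ) ^ (1 / p) : ℝ)) • e 0)
    (hS1 : ∀ x : H, S 1 x = ((⟪e 2, x⟫ : ℂ) / ((2:ℝ) ^ (1 / p) : ℝ)) • e 1) :
    jointOpNorm p S = 1 ∧ jointNumRadius p S = 1 / (2:ℝ) ^ (1 + 1 / p) := by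
  have hp0 : (0:ℝ) < p := by linarith
  set c : ℝ := (2:ℝ) ^ (1 / p) with hc
  have hcpos : 0 < c := Real.rpow_pos_of_pos (by norm_num) _
  have hie : ∀ i j : Fin 3, (⟪e i, e j⟫ : ℂ) = if i = j then 1 else 0 :=
    orthonormal_iff_ite.mp he
  have hnorme : ∀ i : Fin 3, ‖e i‖ = 1 := fun i => he.1 i
  -- norms of S i x
  have hnormS : ∀ (i : Fin 3) (z : ℂ), ‖(z / (c:ℂ)) • e i‖ = ‖z‖ / c := by
    intro i z
    rw [norm_smul, hnorme i, mul_one, norm_div, Complex.norm_real, Real.norm_eq_abs,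
      abs_of_pos hcpos]

  have hsum : ∀ x : H, (∑ i : Fin 2, ‖S i x‖ ^ p) = ‖(⟪e 2, x⟫ : ℂ)‖ ^ p := by
    intro x
    rw [Fin.sum_univ_two, hS0, hS1, hnormS, hnormS,
      Real.div_rpow (norm_nonneg _) hcpos.le, two_rpow_inv_rpow hp0]
    ring
  have hA : jointOpNorm p S = 1 := by
    apply IsGreatest.csSup_eq
    constructor
    · refine ⟨e 2, hnorme 2, ?_⟩
      rw [hsum, hie 2 2, if_pos rfl, norm_one, Real.one_rpow, Real.one_rpow]
    · rintro r ⟨x, hx, rfl⟩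
      rw [hsum, rpow_self_inv hp0 (norm_nonneg _)]
      have := norm_inner_le_norm (𝕜 := ℂ) (e 2) x
      rw [hnorme 2, hx] at this
      simpa using this
  -- inner product values
  have hval : ∀ x : H, (∑ i : Fin 2, ‖(⟪x, S i x⟫ : ℂ)‖ ^ p) ^ (1 / p)
      = (‖(⟪e 2, x⟫ : ℂ)‖ * ((‖(⟪e 0, x⟫ : ℂ)‖ ^ p + ‖(⟪e 1, x⟫ : ℂ)‖ ^ p) ^ (1 / p))) / c := by
    intro x
    have hni : ∀ i : Fin 3, ‖(⟪x, e i⟫ : ℂ)‖ = ‖(⟪e i, x⟫ : ℂ)‖ := fun i => by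
      rw [← inner_conj_symm x (e i)]
      exact RCLike.norm_conj _
    have hterm : ∀ i : Fin 3, ‖(⟪x, ((⟪e 2, x⟫ : ℂ) / (c : ℂ)) • e i⟫ : ℂ)‖
        = (‖(⟪e 2, x⟫ : ℂ)‖ / c) * ‖(⟪e i, x⟫ : ℂ)‖ := by
      intro i
      rw [inner_smul_right, norm_mul, norm_div, Complex.norm_real, Real.norm_eq_abs,
        abs_of_pos hcpos, hni i]
    rw [Fin.sum_univ_two, hS0, hS1, hterm 0, hterm 1]
    set d := ‖(⟪e 2, x⟫ : ℂ)‖ with hd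
    set a0 := ‖(⟪e 0, x⟫ : ℂ)‖ with ha0
    set a1 := ‖(⟪e 1, x⟫ : ℂ)‖ with ha1
    have hd0 : 0 ≤ d := norm_nonneg _
    have h0 : 0 ≤ a0 := norm_nonneg _
    have h1 : 0 ≤ a1 := norm_nonneg _
    have hdc : 0 ≤ d / c := by positivity
    rw [Real.mul_rpow hdc h0, Real.mul_rpow hdc h1, ← mul_add,
      Real.mul_rpow (by positivity) (by positivity), rpow_self_inv hp0 hdc]
    ring
  -- upper bound for the numerical radius values
  have hub : ∀ x : H, ‖x‖ = 1 →
      (∑ i : Fin 2, ‖(⟪x, S i x⟫ : ℂ)‖ ^ p) ^ (1 / p) ≤ 1 / (2 * c) := by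
    intro x hx
    rw [hval x]
    set d := ‖(⟪e 2, x⟫ : ℂ)‖ with hd
    set a0 := ‖(⟪e 0, x⟫ : ℂ)‖ with ha0
    set a1 := ‖(⟪e 1, x⟫ : ℂ)‖ with ha1
    have hbessel : a0 ^ 2 + a1 ^ 2 + d ^ 2 ≤ 1 := by
      have := he.sum_inner_products_le x (s := Finset.univ)
      rw [Fin.sum_univ_three, hx] at this
      simpa using this
    have hX := pnorm_le_sqrt hp (norm_nonneg (⟪e 0, x⟫ : ℂ)) (norm_nonneg (⟪e 1, x⟫ : ℂ))
    set s := Real.sqrt (a0 ^ 2 + a1 ^ 2) with hs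
    have hs0 : 0 ≤ s := Real.sqrt_nonneg _
    have hs2 : s ^ 2 = a0 ^ 2 + a1 ^ 2 := Real.sq_sqrt (by positivity)
    have hd0 : 0 ≤ d := norm_nonneg _
    have hds : d * ((a0 ^ p + a1 ^ p) ^ (1 / p)) ≤ 1 / 2 := by
      have h1 : d * ((a0 ^ p + a1 ^ p) ^ (1 / p)) ≤ d * s :=
        mul_le_mul_of_nonneg_left hX hd0
      nlinarith [h1, sq_nonneg (d - s), hbessel, hs2]
    rw [div_le_div_iff₀ hcpos (by positivity)]
    calc d * (a0 ^ p + a1 ^ p) ^ (1 / p) * (2 * c) ≤ (1 / 2) * (2 * c) := by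
          apply mul_le_mul_of_nonneg_right hds (by positivity)
    _ = 1 * c := by ring
  -- the maximizing vector
  set t : ℝ := (Real.sqrt 2)⁻¹ with ht
  have hsqrt2 : Real.sqrt 2 * Real.sqrt 2 = 2 := Real.mul_self_sqrt (by norm_num)
  have htpos : 0 < t := by positivity
  set x₀ : H := ((t : ℝ) : ℂ) • (e 0 + e 2) with hx₀def
  have hinner₀ : ∀ i : Fin 3, (⟪e i, x₀⟫ : ℂ)
      = (t : ℂ) * ((⟪e i, e 0⟫ : ℂ) + (⟪e i, e 2⟫ : ℂ)) := by
    intro i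
    rw [hx₀def, inner_smul_right, inner_add_right]
  have hnx₀ : ‖x₀‖ = 1 := by
    have hee : ‖e 0 + e 2‖ ^ 2 = 2 := by
      rw [@norm_add_sq ℂ _ _ _ _ (e 0) (e 2), hnorme 0, hnorme 2, hie 0 2]
      simp
      norm_num
    have hee' : ‖e 0 + e 2‖ = Real.sqrt 2 := by
      rw [← Real.sqrt_sq (norm_nonneg (e 0 + e 2)), hee]
    rw [hx₀def, norm_smul, Complex.norm_real, Real.norm_eq_abs, abs_of_pos htpos, hee', ht]
    exact inv_mul_cancel₀ (by positivity)
  have hM : (2:ℝ) ^ (1 + 1 / p) = 2 * c := by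
    rw [Real.rpow_add (by norm_num), Real.rpow_one]
  have hval₀ : (∑ i : Fin 2, ‖(⟪x₀, S i x₀⟫ : ℂ)‖ ^ p) ^ (1 / p) = 1 / (2 * c) := by
    rw [hval x₀]
    have h0 : (⟪e 0, x₀⟫ : ℂ) = (t : ℂ) := by
      rw [hinner₀ 0, hie 0 0, hie 0 2]; simp
    have h1 : (⟪e 1, x₀⟫ : ℂ) = 0 := by
      rw [hinner₀ 1, hie 1 0, hie 1 2]; simp
    have h2 : (⟪e 2, x₀⟫ : ℂ) = (t : ℂ) := by
      rw [hinner₀ 2, hie 2 0, hie 2 2]; simp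
    rw [h0, h1, h2, norm_zero, Real.zero_rpow hp0.ne', add_zero,
      Complex.norm_real, Real.norm_eq_abs, abs_of_pos htpos, rpow_self_inv hp0 htpos.le]
    have ht2 : t * t = 1 / 2 := by
      rw [ht, ← mul_inv, hsqrt2]
      norm_num
    rw [ht2]
    ring
  have hB : jointNumRadius p S = 1 / (2:ℝ) ^ (1 + 1 / p) := by
    rw [hM]
    apply IsGreatest.csSup_eq
    constructor
    · refine ⟨(x₀, innerSL ℂ x₀), (mem_dualPairs_iff _).mpr ⟨hnx₀, rfl⟩, ?_⟩
      simp only [innerSL_apply_apply]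
      exact hval₀.symm
    · rintro r ⟨q, hq, rfl⟩
      obtain ⟨hx1, hx2⟩ := (mem_dualPairs_iff q).mp hq
      rw [hx2]
      simp only [innerSL_apply_apply]
      exact hub q.1 hx1
  exact ⟨hA, hB⟩

lemma lower_bound {p : ℝ} (hp : 2 < p) [CompleteSpace H] (S : Fin 2 → H →L[ℂ] H)
    (hn : jointOpNorm p S = 1) : 1 / (2:ℝ) ^ (1 + 1 / p) ≤ jointNumRadius p S := by
  have hp0 : (0:ℝ) < p := by linarith
  have hex : ∃ x : H, ‖x‖ = 1 := by
    by_contra h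
    push_neg at h
    have hempty : {r | ∃ x : H, ‖x‖ = 1 ∧ r = (∑ i : Fin 2, ‖S i x‖ ^ p) ^ (1 / p)} = ∅ := by
      ext r
      simp only [Set.mem_setOf_eq, Set.mem_empty_iff_false, iff_false, not_exists]
      rintro x ⟨hx, -⟩
      exact h x hx
    rw [jointOpNorm, hempty, Real.sSup_empty] at hn
    norm_num at hn
  obtain ⟨x₀, hx₀⟩ := hex
  set w := jointNumRadius p S with hwdef
  have hbdd : BddAbove {r | ∃ q ∈ dualPairs ℂ H,
      r = (∑ i : Fin 2, ‖q.2 (S i q.1)‖ ^ p) ^ (1 / p)} := by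
    refine ⟨(∑ i : Fin 2, ‖S i‖ ^ p) ^ (1 / p), ?_⟩
    rintro r ⟨q, ⟨hq1, hq2, hq3⟩, rfl⟩
    have hbound : ∀ i : Fin 2, ‖q.2 (S i q.1)‖ ≤ ‖S i‖ := by
      intro i
      calc ‖q.2 (S i q.1)‖ ≤ ‖q.2‖ * ‖S i q.1‖ := q.2.le_opNorm _
      _ ≤ 1 * (‖S i‖ * ‖q.1‖) := by
          rw [hq2]
          exact mul_le_mul_of_nonneg_left ((S i).le_opNorm _) (by norm_num)
      _ = ‖S i‖ := by rw [hq1]; ring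
    apply Real.rpow_le_rpow (by positivity) ?_ (by positivity)
    apply Finset.sum_le_sum
    intro i _
    exact Real.rpow_le_rpow (norm_nonneg _) (hbound i) hp0.le
  have hmem : ∀ x : H, ‖x‖ = 1 → (∑ i : Fin 2, ‖(⟪x, S i x⟫ : ℂ)‖ ^ p) ^ (1 / p) ∈
      {r | ∃ q ∈ dualPairs ℂ H, r = (∑ i : Fin 2, ‖q.2 (S i q.1)‖ ^ p) ^ (1 / p)} := by
    intro x hx
    exact ⟨(x, innerSL ℂ x), (mem_dualPairs_iff _).mpr ⟨hx, rfl⟩, by simp only [innerSL_apply_apply]⟩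
  have hwx : ∀ (x : H), ‖x‖ = 1 → ∀ i : Fin 2, ‖(⟪x, S i x⟫ : ℂ)‖ ≤ w := by
    intro x hx i
    have h1 : (∑ i : Fin 2, ‖(⟪x, S i x⟫ : ℂ)‖ ^ p) ^ (1 / p) ≤ w := le_csSup hbdd (hmem x hx)
    have hle : ‖(⟪x, S i x⟫ : ℂ)‖ ^ p ≤ ∑ i : Fin 2, ‖(⟪x, S i x⟫ : ℂ)‖ ^ p :=
      Finset.single_le_sum (f := fun j : Fin 2 => ‖(⟪x, S j x⟫ : ℂ)‖ ^ p)
        (fun j _ => Real.rpow_nonneg (norm_nonneg _) p) (Finset.mem_univ i)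
    have h2 : ‖(⟪x, S i x⟫ : ℂ)‖ ≤ (∑ i : Fin 2, ‖(⟪x, S i x⟫ : ℂ)‖ ^ p) ^ (1 / p) := by
      calc ‖(⟪x, S i x⟫ : ℂ)‖ = (‖(⟪x, S i x⟫ : ℂ)‖ ^ p) ^ (1 / p) :=
            (rpow_self_inv hp0 (norm_nonneg _)).symm
      _ ≤ _ := Real.rpow_le_rpow (Real.rpow_nonneg (norm_nonneg _) p) hle (by positivity)
    linarith
  have hw0 : 0 ≤ w := le_trans (norm_nonneg _) (hwx x₀ hx₀ 0)
  have hSle : ∀ i : Fin 2, ‖S i‖ ≤ 2 * w := fun i =>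
    opNorm_le_two_mul_of_inner (S i) hw0 (fun x hx => hwx x hx i)
  have hone' : jointOpNorm p S ≤ (2:ℝ) ^ (1 / p) * (2 * w) := by
    rw [jointOpNorm]
    apply Real.sSup_le
    · rintro r ⟨x, hx, rfl⟩
      have hxi : ∀ i : Fin 2, ‖S i x‖ ≤ 2 * w := by
        intro i
        calc ‖S i x‖ ≤ ‖S i‖ * ‖x‖ := (S i).le_opNorm _
        _ = ‖S i‖ := by rw [hx, mul_one]
        _ ≤ 2 * w := hSle i
      calc (∑ i : Fin 2, ‖S i x‖ ^ p) ^ (1 / p) ≤ ((2*w) ^ p + (2*w) ^ p) ^ (1 / p) := by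
            apply Real.rpow_le_rpow (by positivity) ?_ (by positivity)
            rw [Fin.sum_univ_two]
            exact add_le_add (Real.rpow_le_rpow (norm_nonneg _) (hxi 0) hp0.le)
              (Real.rpow_le_rpow (norm_nonneg _) (hxi 1) hp0.le)
      _ = (2:ℝ) ^ (1 / p) * (2 * w) := by
            have h2 : (2*w) ^ p + (2*w) ^ p = 2 * (2*w) ^ p := by ring
            rw [h2, Real.mul_rpow (by norm_num) (Real.rpow_nonneg (by positivity) p),
              rpow_self_inv hp0 (by positivity)]
    · positivity
  have hone : (1:ℝ) ≤ (2:ℝ) ^ (1 / p) * (2 * w) := by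
    calc (1:ℝ) = jointOpNorm p S := hn.symm
    _ ≤ _ := hone'
  have h2c : (2:ℝ) ^ (1 + 1 / p) = 2 * (2:ℝ) ^ (1 / p) := by
    rw [Real.rpow_add (by norm_num), Real.rpow_one]
  rw [h2c, div_le_iff₀ (by positivity)]
  calc (1:ℝ) ≤ (2:ℝ) ^ (1 / p) * (2 * w) := hone
  _ = w * (2 * 2 ^ (1 / p)) := by ring

lemma index_eq {p : ℝ} (hp : 2 < p) [CompleteSpace H] (e : Fin 3 → H)
    (he : Orthonormal ℂ e) : jointNumIndex p 2 ℂ H = 1 / (2:ℝ) ^ (1 + 1 / p) := by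
  set c : ℝ := (2:ℝ) ^ (1 / p) with hc
  set S : Fin 2 → H →L[ℂ] H :=
    ![(innerSL ℂ (e 2)).smulRight (((c:ℝ) : ℂ)⁻¹ • e 0),
      (innerSL ℂ (e 2)).smulRight (((c:ℝ) : ℂ)⁻¹ • e 1)] with hSdef
  have hS0 : ∀ x : H, S 0 x = ((⟪e 2, x⟫ : ℂ) / ((c:ℝ) : ℂ)) • e 0 := by
    intro x
    simp only [hSdef, Matrix.cons_val_zero, ContinuousLinearMap.smulRight_apply, innerSL_apply_apply]
    rw [smul_smul, div_eq_mul_inv]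
  have hS1 : ∀ x : H, S 1 x = ((⟪e 2, x⟫ : ℂ) / ((c:ℝ) : ℂ)) • e 1 := by
    intro x
    simp only [hSdef, Matrix.cons_val_one, Matrix.cons_val_zero,
      ContinuousLinearMap.smulRight_apply, innerSL_apply_apply]
    rw [smul_smul, div_eq_mul_inv]
  obtain ⟨hA, hB⟩ := key_lemma hp e he S hS0 hS1
  apply le_antisymm
  · exact csInf_le ⟨1 / (2:ℝ) ^ (1 + 1 / p), by
      rintro r ⟨T, hT, rfl⟩
      exact lower_bound hp T hT⟩ ⟨S, hA, hB.symm⟩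
  · exact le_csInf ⟨_, S, hA, hB.symm⟩ (by
      rintro r ⟨T, hT, rfl⟩
      exact lower_bound hp T hT)

end AuxStmt19

theorem stmt19 {p : ℝ} (hp : 2 < p)
    (T₁ T₂ : EuclideanSpace ℂ (Fin 3) →L[ℂ] EuclideanSpace ℂ (Fin 3))
    (hT₁ : ∀ (v : EuclideanSpace ℂ (Fin 3)) (j : Fin 3),
      T₁ v j = if j = 0 then v 2 / (((2 : ℝ) ^ (1 / p) : ℝ) : ℂ) else 0)
    (hT₂ : ∀ (v : EuclideanSpace ℂ (Fin 3)) (j : Fin 3),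
      T₂ v j = if j = 1 then v 2 / (((2 : ℝ) ^ (1 / p) : ℝ) : ℂ) else 0) :
    jointOpNorm p ![T₁, T₂] = 1 ∧
    jointNumRadius p ![T₁, T₂] = 1 / (2 : ℝ) ^ (1 + 1 / p) ∧
    (∀ m : ℕ, 3 ≤ m →
      jointNumIndex p 2 ℂ (EuclideanSpace ℂ (Fin m)) = 1 / (2 : ℝ) ^ (1 + 1 / p)) ∧
    jointNumIndex p 2 ℂ (lp (fun _ : ℕ => ℂ) 2) = 1 / (2 : ℝ) ^ (1 + 1 / p) := by
  have he3 : Orthonormal ℂ (fun i : Fin 3 => EuclideanSpace.single i (1:ℂ)) := by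
    rw [orthonormal_iff_ite]
    intro i j
    simp [EuclideanSpace.inner_single_left, EuclideanSpace.single_apply, eq_comm]
  have hS0 : ∀ v : EuclideanSpace ℂ (Fin 3), (![T₁, T₂]) 0 v =
      ((⟪EuclideanSpace.single (2 : Fin 3) (1:ℂ), v⟫ : ℂ) / ((2:ℝ) ^ (1 / p) : ℝ)) •
        EuclideanSpace.single (0 : Fin 3) (1:ℂ) := by
    intro v
    rw [Matrix.cons_val_zero]
    ext j
    rw [hT₁ v j, PiLp.smul_apply, EuclideanSpace.single_apply,
      EuclideanSpace.inner_single_left]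
    simp only [map_one, one_mul, smul_eq_mul, mul_ite, mul_one, mul_zero]
  have hS1 : ∀ v : EuclideanSpace ℂ (Fin 3), (![T₁, T₂]) 1 v =
      ((⟪EuclideanSpace.single (2 : Fin 3) (1:ℂ), v⟫ : ℂ) / ((2:ℝ) ^ (1 / p) : ℝ)) •
        EuclideanSpace.single (1 : Fin 3) (1:ℂ) := by
    intro v
    rw [Matrix.cons_val_one, Matrix.cons_val_zero]
    ext j
    rw [hT₂ v j, PiLp.smul_apply, EuclideanSpace.single_apply,
      EuclideanSpace.inner_single_left]
    simp only [map_one, one_mul, smul_eq_mul, mul_ite, mul_one, mul_zero]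
  obtain ⟨h1, h2⟩ := key_lemma hp (fun i : Fin 3 => EuclideanSpace.single i (1:ℂ)) he3
    ![T₁, T₂] hS0 hS1
  refine ⟨h1, h2, ?_, ?_⟩
  · intro m hm
    refine index_eq hp (fun i : Fin 3 => EuclideanSpace.single (Fin.castLE hm i) (1:ℂ)) ?_
    rw [orthonormal_iff_ite]
    intro i j
    simp [EuclideanSpace.inner_single_left, EuclideanSpace.single_apply, Fin.castLE_inj,
      eq_comm]
  · refine index_eq hp (fun i : Fin 3 => (lp.single 2 ((i:ℕ)) (1:ℂ) : lp (fun _ : ℕ => ℂ) 2)) ?_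
    rw [orthonormal_iff_ite]
    intro i j
    rw [lp.inner_single_left, lp.single_apply]
    rcases eq_or_ne i j with rfl | hij
    · simp
    · rw [Pi.single_apply, if_neg (by simpa [Fin.val_inj] using hij)]
      simp [hij]
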